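/- The Minkowski–Stieltjes measure μ is the Bernoulli measure for the Gauss map with weights (2^{-k})_{k≥1}: for any finite sequence of positive integers (a_1,…,a_n), the cylinder set of x ∈ (0,1) whose first n continued fraction partial quotients are a_1,…,a_n has μ-measure 2^{-(a_1+⋯+a_n)}. -/

import Mathlib

open MeasureTheory Set

/-- The Gauss map `x ↦ 1/x mod 1` (with `0 ↦ 0`). -/
noncomputable def gaussMap (x : ℝ) : ℝ := if x = 0 then 0 else Int.fract x⁻¹

/-- The `(k+1)`-st continued fraction partial quotient `a_{k+1}(x)`. -/
noncomputable def cfDigit (k : ℕ) (x : ℝ) : ℕ := ⌊(gaussMap^[k] x)⁻¹⌋₊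

/-- `cfSum n x = a_1(x) + ⋯ + a_n(x)`. -/
noncomputable def cfSum (n : ℕ) (x : ℝ) : ℕ := ∑ i ∈ Finset.range n, cfDigit i x

/-- Minkowski's question mark function, defined by Salem's series
`?(x) = Σ_{k≥1} (-1)^{k-1} 2^{1-(a_1+⋯+a_k)}`, which is a finite sum for rational `x`
(the terms are cut off once the Gauss-map orbit reaches `0`). -/
noncomputable def mink (x : ℝ) : ℝ :=
  ∑' k : ℕ, if gaussMap^[k] x = 0 then 0 else
    (-1 : ℝ) ^ k * (2 : ℝ) ^ ((1 : ℤ) - (cfSum (k + 1) x : ℤ))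

namespace MinkProof

noncomputable def cfVal : List ℕ → ℝ
  | [] => 0
  | a :: l => ((a : ℝ) + cfVal l)⁻¹

def bump : List ℕ → List ℕ
  | [] => []
  | [a] => [a + 1]
  | a :: b :: l => a :: bump (b :: l)

noncomputable def salem : List ℕ → ℝ
  | [] => 0
  | a :: l => 2 ^ ((1:ℤ) - (a:ℤ)) - 2 ^ (-(a:ℤ)) * salem l

@[simp] lemma cfVal_nil : cfVal [] = 0 := rfl
@[simp] lemma cfVal_cons (a : ℕ) (l : List ℕ) : cfVal (a :: l) = ((a : ℝ) + cfVal l)⁻¹ := rfl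
@[simp] lemma bump_nil : bump [] = [] := rfl
@[simp] lemma bump_singleton (a : ℕ) : bump [a] = [a+1] := rfl
@[simp] lemma bump_cons (a b : ℕ) (l : List ℕ) : bump (a :: b :: l) = a :: bump (b :: l) := rfl
@[simp] lemma salem_nil : salem [] = 0 := rfl
@[simp] lemma salem_cons (a : ℕ) (l : List ℕ) :
    salem (a :: l) = 2 ^ ((1:ℤ) - (a:ℤ)) - 2 ^ (-(a:ℤ)) * salem l := rfl

@[simp] lemma gaussMap_zero : gaussMap 0 = 0 := if_pos rfl
@[simp] lemma gaussMap_iterate_zero (n : ℕ) : gaussMap^[n] 0 = 0 :=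
  Function.iterate_fixed gaussMap_zero n

lemma orbit_zero {x : ℝ} {N : ℕ} (h : gaussMap^[N] x = 0) {m : ℕ} (hm : N ≤ m) :
    gaussMap^[m] x = 0 := by
  obtain ⟨j, rfl⟩ := Nat.exists_eq_add_of_le hm
  rw [add_comm, Function.iterate_add_apply, h, gaussMap_iterate_zero]

lemma cfDigit_succ (i : ℕ) (x : ℝ) : cfDigit (i+1) x = cfDigit i (gaussMap x) := by
  simp [cfDigit, Function.iterate_succ_apply]

lemma cfSum_succ' (k : ℕ) (x : ℝ) :
    cfSum (k+1) x = cfSum k (gaussMap x) + cfDigit 0 x := by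
  unfold cfSum
  rw [Finset.sum_range_succ']
  simp [cfDigit_succ]

-- basic bounds on cfVal
lemma cfVal_nonneg : ∀ l : List ℕ, (∀ b ∈ l, 1 ≤ b) → 0 ≤ cfVal l
  | [], _ => le_refl 0
  | a :: l, h => by
    have ha : 1 ≤ a := h a (by simp)
    have hl := cfVal_nonneg l (fun b hb => h b (by simp [hb]))
    have : (0:ℝ) < (a:ℝ) + cfVal l := by
      have : (1:ℝ) ≤ (a:ℝ) := by exact_mod_cast ha
      linarith
    exact le_of_lt (by rw [cfVal_cons]; exact inv_pos.mpr this)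

lemma cfVal_pos {l : List ℕ} (h : ∀ b ∈ l, 1 ≤ b) (hne : l ≠ []) : 0 < cfVal l := by
  cases l with
  | nil => exact absurd rfl hne
  | cons a m =>
    have ha : 1 ≤ a := h a (by simp)
    have hm := cfVal_nonneg m (fun b hb => h b (by simp [hb]))
    have : (0:ℝ) < (a:ℝ) + cfVal m := by
      have : (1:ℝ) ≤ (a:ℝ) := by exact_mod_cast ha
      linarith
    simpa using inv_pos.mpr this

lemma cfVal_le_one {l : List ℕ} (h : ∀ b ∈ l, 1 ≤ b) : cfVal l ≤ 1 := by
  cases l with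
  | nil => simp
  | cons a m =>
    have ha : 1 ≤ a := h a (by simp)
    have hm := cfVal_nonneg m (fun b hb => h b (by simp [hb]))
    have h1 : (1:ℝ) ≤ (a:ℝ) + cfVal m := by
      have : (1:ℝ) ≤ (a:ℝ) := by exact_mod_cast ha
      linarith
    rw [cfVal_cons]; exact inv_le_one_of_one_le₀ h1

lemma cfVal_lt_one {l : List ℕ} (h : ∀ b ∈ l, 1 ≤ b) (hne : l ≠ [1]) : cfVal l < 1 := by
  cases l with
  | nil => simp
  | cons a m =>
    have ha : 1 ≤ a := h a (by simp)
    have hm := cfVal_nonneg m (fun b hb => h b (by simp [hb]))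
    have h1 : (1:ℝ) < (a:ℝ) + cfVal m := by
      rcases Nat.lt_or_ge a 2 with h2 | h2
      · interval_cases a
        have hmne : m ≠ [] := by rintro rfl; exact hne rfl
        have := cfVal_pos (fun b hb => h b (by simp [hb])) hmne
        push_cast; linarith
      · have : (2:ℝ) ≤ (a:ℝ) := by exact_mod_cast h2
        linarith
    calc cfVal (a :: m) = ((a:ℝ) + cfVal m)⁻¹ := rfl
    _ < 1 := by rw [inv_lt_one_iff₀]; right; exact h1

-- Gauss step lemmas
lemma gaussMap_eq_of (x : ℝ) (hx : 0 < x) (a : ℕ) (t : ℝ) (ht0 : 0 ≤ t) (ht1 : t < 1)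
    (hxi : x⁻¹ = (a:ℝ) + t) : gaussMap x = t := by
  rw [gaussMap, if_neg (ne_of_gt hx), hxi]
  rw [show ((a:ℝ) + t) = ((a:ℤ):ℝ) + t by push_cast; ring]
  rw [Int.fract_intCast_add]
  exact Int.fract_eq_self.mpr ⟨ht0, ht1⟩

lemma cfDigit_zero_eq_of (x : ℝ) (a : ℕ) (t : ℝ) (ht0 : 0 ≤ t) (ht1 : t < 1)
    (hxi : x⁻¹ = (a:ℝ) + t) : cfDigit 0 x = a := by
  have h0 : (0:ℝ) ≤ x⁻¹ := by rw [hxi]; positivity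
  rw [cfDigit, Function.iterate_zero_apply]
  rw [Nat.floor_eq_iff h0]
  constructor
  · rw [hxi]; linarith
  · rw [hxi]; push_cast; linarith

lemma cfDigit_zero_bounds {x : ℝ} (hx : 0 < x) :
    ((cfDigit 0 x : ℝ)) ≤ x⁻¹ ∧ x⁻¹ < (cfDigit 0 x : ℝ) + 1 := by
  have h0 : (0:ℝ) ≤ x⁻¹ := (inv_pos.mpr hx).le
  constructor
  · exact Nat.floor_le h0
  · exact Nat.lt_floor_add_one x⁻¹

-- mink as a finite sum
lemma mink_eq_sum {x : ℝ} {N : ℕ} (hN : gaussMap^[N] x = 0) :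
    mink x = ∑ k ∈ Finset.range N, (if gaussMap^[k] x = 0 then 0 else
      (-1 : ℝ) ^ k * (2 : ℝ) ^ ((1 : ℤ) - (cfSum (k + 1) x : ℤ))) := by
  unfold mink
  apply tsum_eq_sum
  intro k hk
  rw [Finset.mem_range, not_lt] at hk
  rw [if_pos (orbit_zero hN hk)]

lemma mink_zero : mink 0 = 0 := by
  rw [mink_eq_sum (N := 0) (by simp)]
  simp

lemma mink_shift {x : ℝ} (hx : x ≠ 0) {N : ℕ} (hN : gaussMap^[N] x = 0) :
    mink x = 2 ^ ((1:ℤ) - (cfDigit 0 x : ℤ))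
      - 2 ^ (-(cfDigit 0 x : ℤ)) * mink (gaussMap x) := by
  have hN1 : gaussMap^[N + 1] x = 0 := orbit_zero hN (Nat.le_succ N)
  have hNy : gaussMap^[N] (gaussMap x) = 0 := by
    rw [← Function.iterate_succ_apply]; exact hN1
  rw [mink_eq_sum hN1, mink_eq_sum hNy, Finset.sum_range_succ']
  have h0 : (if gaussMap^[0] x = 0 then (0:ℝ) else
      (-1 : ℝ) ^ 0 * (2 : ℝ) ^ ((1 : ℤ) - (cfSum (0 + 1) x : ℤ)))
      = 2 ^ ((1:ℤ) - (cfDigit 0 x : ℤ)) := by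
    rw [Function.iterate_zero_apply, if_neg hx]
    simp [cfSum, Finset.sum_range_one]
  rw [h0]
  have hterm : ∀ k, (if gaussMap^[k+1] x = 0 then (0:ℝ) else
      (-1 : ℝ) ^ (k+1) * (2 : ℝ) ^ ((1 : ℤ) - (cfSum (k + 1 + 1) x : ℤ)))
      = (-(2:ℝ) ^ (-(cfDigit 0 x : ℤ))) * (if gaussMap^[k] (gaussMap x) = 0 then (0:ℝ) else
      (-1 : ℝ) ^ k * (2 : ℝ) ^ ((1 : ℤ) - (cfSum (k + 1) (gaussMap x) : ℤ))) := by
    intro k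
    rw [Function.iterate_succ_apply]
    by_cases hk : gaussMap^[k] (gaussMap x) = 0
    · rw [if_pos hk, if_pos hk, mul_zero]
    · rw [if_neg hk, if_neg hk]
      have hsum : cfSum (k + 1 + 1) x = cfSum (k+1) (gaussMap x) + cfDigit 0 x :=
        cfSum_succ' (k+1) x
      rw [hsum]
      have : ((1 : ℤ) - ((cfSum (k+1) (gaussMap x) + cfDigit 0 x : ℕ) : ℤ))
          = ((1 : ℤ) - (cfSum (k+1) (gaussMap x) : ℤ)) + (-(cfDigit 0 x : ℤ)) := by
        push_cast; ring
      rw [this, zpow_add₀ (two_ne_zero)]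
      ring
  calc (∑ k ∈ Finset.range N, (if gaussMap^[k+1] x = 0 then (0:ℝ) else
      (-1 : ℝ) ^ (k+1) * (2 : ℝ) ^ ((1 : ℤ) - (cfSum (k + 1 + 1) x : ℤ))))
      + 2 ^ ((1:ℤ) - (cfDigit 0 x : ℤ))
      = (∑ k ∈ Finset.range N, (-(2:ℝ) ^ (-(cfDigit 0 x : ℤ))) * (if gaussMap^[k] (gaussMap x) = 0 then (0:ℝ) else
      (-1 : ℝ) ^ k * (2 : ℝ) ^ ((1 : ℤ) - (cfSum (k + 1) (gaussMap x) : ℤ))))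
      + 2 ^ ((1:ℤ) - (cfDigit 0 x : ℤ)) := by
        congr 1
        exact Finset.sum_congr rfl (fun k _ => hterm k)
  _ = _ := by
        rw [← Finset.mul_sum]
        ring

lemma two_zpow_one_sub (a : ℤ) : (2:ℝ) ^ ((1:ℤ) - a) = 2 * 2 ^ (-a) := by
  rw [sub_eq_add_neg, zpow_add₀ (two_ne_zero), zpow_one]

lemma cfVal_pair_one (a : ℕ) : cfVal [a, 1] = cfVal [a+1] := by
  simp [cfVal]

lemma salem_pair_one (a : ℕ) : salem [a, 1] = salem [a+1] := by
  simp [salem, two_zpow_one_sub]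
  ring

lemma main_val : ∀ n : ℕ, ∀ l : List ℕ, l.length ≤ n → (∀ b ∈ l, 1 ≤ b) →
    (∃ N, gaussMap^[N] (cfVal l) = 0) ∧ mink (cfVal l) = salem l := by
  intro n
  induction n with
  | zero =>
    intro l hl _
    have : l = [] := List.eq_nil_of_length_eq_zero (Nat.le_zero.mp hl)
    subst this
    exact ⟨⟨0, by simp⟩, by simpa using mink_zero⟩
  | succ n ih =>
    intro l hl hpos
    cases l with
    | nil => exact ⟨⟨0, by simp⟩, by simpa using mink_zero⟩
    | cons a m =>
      have ha : 1 ≤ a := hpos a (by simp)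
      have hmpos : ∀ b ∈ m, 1 ≤ b := fun b hb => hpos b (by simp [hb])
      by_cases hm : m = [1]
      · subst hm
        have hlen : (1:ℕ) ≤ n := by simpa using hl
        have := ih [a+1] (by simpa using hlen) (by simp)
        rw [show cfVal (a :: [1]) = cfVal [a+1] from cfVal_pair_one a,
            show salem (a :: [1]) = salem [a+1] from salem_pair_one a]
        exact this
      · set t := cfVal m with htdef
        have ht0 : 0 ≤ t := cfVal_nonneg m hmpos
        have ht1 : t < 1 := cfVal_lt_one hmpos hm
        set x := cfVal (a :: m) with hxdef
        have hxpos : 0 < x := cfVal_pos hpos (by simp)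
        have hxinv : x⁻¹ = (a:ℝ) + t := by
          rw [hxdef, cfVal_cons, inv_inv, htdef]
        have hg : gaussMap x = t := gaussMap_eq_of x hxpos a t ht0 ht1 hxinv
        have hd : cfDigit 0 x = a := cfDigit_zero_eq_of x a t ht0 ht1 hxinv
        obtain ⟨⟨N, hN⟩, hmink⟩ := ih m (by simpa using Nat.le_of_succ_le_succ hl) hmpos
        have hN' : gaussMap^[N+1] x = 0 := by
          rw [Function.iterate_succ_apply, hg]; exact hN
        refine ⟨⟨N+1, hN'⟩, ?_⟩
        rw [mink_shift (ne_of_gt hxpos) hN', hd, hg, hmink, salem_cons]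

lemma two_zpow_pos (a : ℤ) : (0:ℝ) < 2 ^ a := zpow_pos two_pos a

lemma salem_bounds : ∀ l : List ℕ, (∀ b ∈ l, 1 ≤ b) → 0 ≤ salem l ∧ salem l ≤ 1 := by
  intro l
  induction l with
  | nil => simp
  | cons a m ih =>
    intro hpos
    have ha : 1 ≤ a := hpos a (by simp)
    obtain ⟨h0, h1⟩ := ih (fun b hb => hpos b (by simp [hb]))
    rw [salem_cons, two_zpow_one_sub]
    have hpa := two_zpow_pos (-(a:ℤ))
    have hle : (2:ℝ) ^ (-(a:ℤ)) ≤ 2⁻¹ := by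
      rw [show ((2:ℝ))⁻¹ = 2 ^ (-1:ℤ) by norm_num]
      exact zpow_le_zpow_right₀ one_le_two (by omega)
    exact ⟨by nlinarith, by nlinarith⟩

lemma bump_length : ∀ l : List ℕ, (bump l).length = l.length := by
  intro l
  induction l with
  | nil => simp
  | cons a m ih =>
    cases m with
    | nil => simp
    | cons b m' => simp only [bump_cons, List.length_cons] at *; omega

lemma bump_pos : ∀ l : List ℕ, (∀ b ∈ l, 1 ≤ b) → ∀ b ∈ bump l, 1 ≤ b := by
  intro l
  induction l with
  | nil => simp
  | cons a m ih =>
    intro hpos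
    cases m with
    | nil =>
      intro b hb; simp at hb; omega
    | cons c m' =>
      intro b hb
      rw [bump_cons] at hb
      rcases List.mem_cons.mp hb with rfl | hb
      · exact hpos b (by simp)
      · exact ih (fun y hy => hpos y (by simp [hy])) b hb

lemma salem_bump : ∀ l : List ℕ, l ≠ [] →
    salem (bump l) = salem l + (-1:ℝ) ^ l.length * 2 ^ (-(l.sum:ℤ)) := by
  intro l
  induction l with
  | nil => intro h; exact absurd rfl h
  | cons a m ih =>
    intro _
    cases m with
    | nil =>
      simp only [bump_singleton, salem_cons, salem_nil, mul_zero, sub_zero,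
        List.length_singleton, pow_one, List.sum_cons, List.sum_nil, add_zero]
      rw [show ((1:ℤ) - ((a+1:ℕ):ℤ)) = -(a:ℤ) by push_cast; ring, two_zpow_one_sub]
      ring
    | cons b m' =>
      rw [bump_cons, salem_cons, salem_cons, ih (by simp)]
      have hlen : (b :: m').length + 1 = (a :: b :: m').length := by simp
      have hsum : ((a :: b :: m').sum : ℤ) = (a:ℤ) + ((b :: m').sum : ℤ) := by
        push_cast [List.sum_cons]; ring
      rw [show (-(((a :: b :: m').sum):ℤ)) = (-(a:ℤ)) + (-(((b::m').sum):ℤ)) by rw [hsum]; ring]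
      rw [zpow_add₀ two_ne_zero]
      simp only [List.length_cons]
      ring

lemma salem_append : ∀ l : List ℕ, ∀ k : ℕ,
    salem (l ++ [k]) = salem l + (-1:ℝ) ^ l.length * 2 ^ ((1:ℤ) - (l.sum:ℤ) - (k:ℤ)) := by
  intro l
  induction l with
  | nil => intro k; simp [salem]
  | cons a m ih =>
    intro k
    rw [List.cons_append, salem_cons, salem_cons, ih k]
    have : ((1:ℤ) - (((a::m).sum):ℤ) - (k:ℤ)) = (-(a:ℤ)) + ((1:ℤ) - ((m.sum):ℤ) - (k:ℤ)) := by
      push_cast [List.sum_cons]; ring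
    rw [this, zpow_add₀ two_ne_zero]
    simp only [List.length_cons]
    ring

lemma inv_lt_inv_pos {s t : ℝ} (hs : 0 < s) (h : s < t) : t⁻¹ < s⁻¹ := by
  rw [inv_lt_inv₀ (lt_trans hs h) hs]
  exact h

lemma cfVal_bump_cmp : ∀ l : List ℕ, (∀ b ∈ l, 1 ≤ b) → l ≠ [] →
    (Odd l.length → cfVal (bump l) < cfVal l) ∧
    (Even l.length → cfVal l < cfVal (bump l)) := by
  intro l
  induction l with
  | nil => intro _ h; exact absurd rfl h
  | cons a m ih =>
    intro hpos _
    have ha : 1 ≤ a := hpos a (by simp)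
    have hmpos : ∀ b ∈ m, 1 ≤ b := fun b hb => hpos b (by simp [hb])
    cases m with
    | nil =>
      constructor
      · intro _
        simp only [bump_singleton, cfVal_cons, cfVal_nil, add_zero]
        apply inv_lt_inv_pos
        · exact_mod_cast Nat.lt_of_lt_of_le Nat.zero_lt_one ha
        · exact_mod_cast Nat.lt_succ_self a
      · intro h
        simp at h
    | cons b m' =>
      obtain ⟨hodd, heven⟩ := ih hmpos (by simp)
      have hbp : 0 < cfVal (b :: m') := cfVal_pos hmpos (by simp)
      have hbumpp : 0 < cfVal (bump (b :: m')) :=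
        cfVal_pos (bump_pos _ hmpos) (by rw [← List.length_pos_iff, bump_length]; simp)
      constructor
      · intro hO
        rw [List.length_cons, Nat.odd_add_one] at hO
        have h1 : cfVal (b :: m') < cfVal (bump (b :: m')) := heven (Nat.not_odd_iff_even.mp hO)
        rw [bump_cons, cfVal_cons a (bump (b :: m')), cfVal_cons a (b :: m')]
        apply inv_lt_inv_pos
        · positivity
        · exact add_lt_add_right h1 _
      · intro hE
        rw [List.length_cons, Nat.even_add_one] at hE
        have h1 : cfVal (bump (b :: m')) < cfVal (b :: m') := hodd (Nat.not_even_iff_odd.mp hE)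
        rw [bump_cons, cfVal_cons a (bump (b :: m')), cfVal_cons a (b :: m')]
        apply inv_lt_inv_pos
        · positivity
        · exact add_lt_add_right h1 _

lemma cfVal_append_cmp (k : ℕ) (hk : 1 ≤ k) : ∀ l : List ℕ, (∀ b ∈ l, 1 ≤ b) → l ≠ [] →
    (Odd l.length → cfVal (l ++ [k]) < cfVal l) ∧
    (Even l.length → cfVal l < cfVal (l ++ [k])) := by
  intro l
  induction l with
  | nil => intro _ h; exact absurd rfl h
  | cons a m ih =>
    intro hpos _
    have ha : 1 ≤ a := hpos a (by simp)
    have hmpos : ∀ b ∈ m, 1 ≤ b := fun b hb => hpos b (by simp [hb])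
    cases m with
    | nil =>
      constructor
      · intro _
        simp only [List.nil_append, List.cons_append, cfVal_cons, cfVal_nil, add_zero]
        apply inv_lt_inv_pos
        · exact_mod_cast Nat.lt_of_lt_of_le Nat.zero_lt_one ha
        · have : (0:ℝ) < (k:ℝ)⁻¹ := by
            have : (0:ℝ) < (k:ℝ) := by exact_mod_cast hk
            positivity
          nlinarith [this]
      · intro h
        simp at h
    | cons b m' =>
      obtain ⟨hodd, heven⟩ := ih hmpos (by simp)
      have hbp : 0 < cfVal (b :: m') := cfVal_pos hmpos (by simp)
      have happ : 0 < cfVal ((b :: m') ++ [k]) := by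
        apply cfVal_pos
        · intro y hy
          rcases List.mem_append.mp hy with hy | hy
          · exact hmpos y hy
          · simp at hy; omega
        · simp
      constructor
      · intro hO
        rw [List.length_cons, Nat.odd_add_one] at hO
        have h1 : cfVal (b :: m') < cfVal ((b :: m') ++ [k]) := heven (Nat.not_odd_iff_even.mp hO)
        rw [List.cons_append, cfVal_cons a ((b :: m') ++ [k]), cfVal_cons a (b :: m')]
        apply inv_lt_inv_pos
        · positivity
        · exact add_lt_add_right h1 _
      · intro hE
        rw [List.length_cons, Nat.even_add_one] at hE
        have h1 : cfVal ((b :: m') ++ [k]) < cfVal (b :: m') := hodd (Nat.not_even_iff_odd.mp hE)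
        rw [List.cons_append, cfVal_cons a ((b :: m') ++ [k]), cfVal_cons a (b :: m')]
        apply inv_lt_inv_pos
        · positivity
        · exact add_lt_add_right h1 _

lemma inv_min_max {s t : ℝ} (hs : 0 < s) (ht : 0 < t) :
    min s⁻¹ t⁻¹ = (max s t)⁻¹ ∧ max s⁻¹ t⁻¹ = (min s t)⁻¹ := by
  rcases le_total s t with h | h
  · rw [max_eq_right h, min_eq_left h,
      min_eq_right (by exact inv_anti₀ hs h), max_eq_left (by exact inv_anti₀ hs h)]
    exact ⟨rfl, rfl⟩
  · rw [max_eq_left h, min_eq_right h,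
      min_eq_left (by exact inv_anti₀ ht h), max_eq_right (by exact inv_anti₀ ht h)]
    exact ⟨rfl, rfl⟩

lemma bump_ne_nil {l : List ℕ} (h : l ≠ []) : bump l ≠ [] := by
  intro hc
  have := bump_length l
  rw [hc] at this
  simp at this
  exact h (List.eq_nil_of_length_eq_zero this.symm)

-- endpoint recursion for min/max
lemma minmax_cons (a : ℕ) (m : List ℕ) (hm : ∀ b ∈ m, 1 ≤ b) (hne : m ≠ []) :
    min (cfVal (a :: m)) (cfVal (bump (a :: m)))
      = ((a:ℝ) + max (cfVal m) (cfVal (bump m)))⁻¹ ∧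
    max (cfVal (a :: m)) (cfVal (bump (a :: m)))
      = ((a:ℝ) + min (cfVal m) (cfVal (bump m)))⁻¹ := by
  obtain ⟨b, m', rfl⟩ := List.exists_cons_of_ne_nil hne
  have h1 : 0 < (a:ℝ) + cfVal (b :: m') := by
    have := cfVal_pos hm (by simp); positivity
  have h2 : 0 < (a:ℝ) + cfVal (bump (b :: m')) := by
    have := cfVal_pos (bump_pos _ hm) (bump_ne_nil (by simp)); positivity
  have := inv_min_max h1 h2
  rw [bump_cons, cfVal_cons a (b :: m'), cfVal_cons a (bump (b :: m'))]
  constructor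
  · rw [this.1]
    congr 1
    rcases le_total (cfVal (b :: m')) (cfVal (bump (b :: m'))) with h | h
    · rw [max_eq_right h, max_eq_right (by linarith)]
    · rw [max_eq_left h, max_eq_left (by linarith)]
  · rw [this.2]
    congr 1
    rcases le_total (cfVal (b :: m')) (cfVal (bump (b :: m'))) with h | h
    · rw [min_eq_left h, min_eq_left (by linarith)]
    · rw [min_eq_right h, min_eq_right (by linarith)]

@[simp] lemma cfVal_singleton (a : ℕ) : cfVal [a] = (a:ℝ)⁻¹ := by simp

lemma minmax_singleton (a : ℕ) (ha : 1 ≤ a) :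
    min (cfVal [a]) (cfVal (bump [a])) = ((a:ℝ) + 1)⁻¹ ∧
    max (cfVal [a]) (cfVal (bump [a])) = (a:ℝ)⁻¹ := by
  have h1 : cfVal (bump [a]) = ((a:ℝ)+1)⁻¹ := by simp [bump]
  have h2 : ((a:ℝ)+1)⁻¹ ≤ (a:ℝ)⁻¹ := by
    apply inv_anti₀
    · exact_mod_cast ha
    · linarith
  rw [h1, cfVal_singleton, min_eq_right h2, max_eq_left h2]
  exact ⟨rfl, rfl⟩

lemma subset_Icc : ∀ A : List ℕ, (∀ b ∈ A, 1 ≤ b) → A ≠ [] → ∀ x : ℝ, 0 < x → x < 1 →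
    (∀ i, i < A.length → cfDigit i x = A.getD i 0) →
    min (cfVal A) (cfVal (bump A)) ≤ x ∧ x ≤ max (cfVal A) (cfVal (bump A)) := by
  intro A
  induction A with
  | nil => intro _ h; exact absurd rfl h
  | cons a m ih =>
    intro hpos _ x hx hx1 hd
    have ha : 1 ≤ a := hpos a (by simp)
    have haR : (1:ℝ) ≤ (a:ℝ) := by exact_mod_cast ha
    have hd0 : cfDigit 0 x = a := by simpa using hd 0 (by simp)
    have hb := cfDigit_zero_bounds hx
    rw [hd0] at hb
    obtain ⟨hbl, hbu⟩ := hb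
    cases m with
    | nil =>
      rw [(minmax_singleton a ha).1, (minmax_singleton a ha).2]
      constructor
      · have : x⁻¹ < (a:ℝ) + 1 := by push_cast at hbu ⊢; linarith
        have h2 := inv_lt_inv_pos (inv_pos.mpr hx) this
        rw [inv_inv] at h2
        exact h2.le
      · have h2 := inv_anti₀ (by linarith : (0:ℝ) < (a:ℝ)) hbl
        rw [inv_inv] at h2
        exact h2
    | cons b m' =>
      have hmpos : ∀ y ∈ (b :: m'), 1 ≤ y := fun y hy => hpos y (by simp [hy])
      set y := x⁻¹ - (a:ℝ) with hydef
      have hy0 : 0 ≤ y := by simp [hydef]; linarith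
      have hy1 : y < 1 := by simp [hydef]; push_cast at hbu; linarith
      have hg : gaussMap x = y := gaussMap_eq_of x hx a y hy0 hy1 (by ring)
      have hdm : ∀ i, i < (b::m').length → cfDigit i y = (b::m').getD i 0 := by
        intro i hi
        have := hd (i+1) (by simpa using Nat.succ_lt_succ hi)
        rw [cfDigit_succ, hg] at this
        simpa using this
      have hyne : y ≠ 0 := by
        intro hyy
        have h0 := hdm 0 (by simp)
        rw [hyy] at h0
        have : cfDigit 0 (0:ℝ) = 0 := by simp [cfDigit]
        rw [this] at h0
        have := hmpos b (by simp)
        simp at h0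
        omega
      have hypos : 0 < y := lt_of_le_of_ne hy0 (Ne.symm hyne)
      obtain ⟨hyl, hyu⟩ := ih hmpos (by simp) y hypos hy1 hdm
      obtain ⟨hmin, hmax⟩ := minmax_cons a (b::m') hmpos (by simp)
      rw [hmin, hmax]
      have hlMpos : 0 < min (cfVal (b::m')) (cfVal (bump (b::m'))) := by
        apply lt_min
        · exact cfVal_pos hmpos (by simp)
        · exact cfVal_pos (bump_pos _ hmpos) (bump_ne_nil (by simp))
      have hxinv : x⁻¹ = (a:ℝ) + y := by rw [hydef]; ring
      constructor
      · have : x⁻¹ ≤ (a:ℝ) + max (cfVal (b::m')) (cfVal (bump (b::m'))) := by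
          rw [hxinv]; linarith
        have h2 := inv_anti₀ (inv_pos.mpr hx) this
        rw [inv_inv] at h2
        exact h2
      · have : (a:ℝ) + min (cfVal (b::m')) (cfVal (bump (b::m'))) ≤ x⁻¹ := by
          rw [hxinv]; linarith
        have h2 := inv_anti₀ (by positivity) this
        rw [inv_inv] at h2
        exact h2

lemma Ioo_subset : ∀ A : List ℕ, (∀ b ∈ A, 1 ≤ b) → A ≠ [] → ∀ x : ℝ,
    min (cfVal A) (cfVal (bump A)) < x → x < max (cfVal A) (cfVal (bump A)) →
    (0 < x ∧ x < 1) ∧ ∀ i, i < A.length → cfDigit i x = A.getD i 0 := by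
  intro A
  induction A with
  | nil => intro _ h; exact absurd rfl h
  | cons a m ih =>
    intro hpos _ x hxl hxu
    have ha : 1 ≤ a := hpos a (by simp)
    have haR : (1:ℝ) ≤ (a:ℝ) := by exact_mod_cast ha
    cases m with
    | nil =>
      rw [(minmax_singleton a ha).1] at hxl
      rw [(minmax_singleton a ha).2] at hxu
      have hx : 0 < x := lt_trans (by positivity) hxl
      have hx1 : x < 1 := lt_of_lt_of_le hxu (inv_le_one_of_one_le₀ haR)
      have hiu : (a:ℝ) < x⁻¹ := by
        have := inv_lt_inv_pos hx hxu
        rwa [inv_inv] at this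
      have hil : x⁻¹ < (a:ℝ) + 1 := by
        have := inv_lt_inv_pos (by positivity) hxl
        rwa [inv_inv] at this
      refine ⟨⟨hx, hx1⟩, ?_⟩
      intro i hi
      have hi0 : i = 0 := by simp at hi; omega
      subst hi0
      simpa using cfDigit_zero_eq_of x a (x⁻¹ - a) (by linarith) (by linarith) (by ring)
    | cons b m' =>
      have hmpos : ∀ z ∈ (b :: m'), 1 ≤ z := fun z hz => hpos z (by simp [hz])
      obtain ⟨hmin, hmax⟩ := minmax_cons a (b::m') hmpos (by simp)
      rw [hmin] at hxl
      rw [hmax] at hxu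
      set lM := min (cfVal (b::m')) (cfVal (bump (b::m'))) with hlM
      set rM := max (cfVal (b::m')) (cfVal (bump (b::m'))) with hrM
      have hlMpos : 0 < lM := by
        apply lt_min
        · exact cfVal_pos hmpos (by simp)
        · exact cfVal_pos (bump_pos _ hmpos) (bump_ne_nil (by simp))
      have hrM1 : rM ≤ 1 := by
        apply max_le
        · exact cfVal_le_one hmpos
        · exact cfVal_le_one (bump_pos _ hmpos)
      have hlr : lM ≤ rM := min_le_max
      have hx : 0 < x := lt_trans (inv_pos.mpr (by linarith)) hxl
      have hx1 : x < 1 := by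
        apply lt_of_lt_of_le hxu
        rw [show (1:ℝ) = 1⁻¹ by norm_num]
        apply inv_anti₀ (by norm_num)
        linarith
      have hiu : (a:ℝ) + lM < x⁻¹ := by
        have := inv_lt_inv_pos hx hxu
        rwa [inv_inv] at this
      have hil : x⁻¹ < (a:ℝ) + rM := by
        have := inv_lt_inv_pos (inv_pos.mpr (by linarith)) hxl
        rwa [inv_inv] at this
      set y := x⁻¹ - (a:ℝ) with hydef
      have hyl : lM < y := by simp [hydef]; linarith
      have hyu : y < rM := by simp [hydef]; linarith
      obtain ⟨⟨hy0, hy1⟩, hdm⟩ := ih hmpos (by simp) y hyl hyu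
      have hg : gaussMap x = y := gaussMap_eq_of x hx a y hy0.le hy1 (by ring)
      have hd0 : cfDigit 0 x = a := cfDigit_zero_eq_of x a y hy0.le hy1 (by ring)
      refine ⟨⟨hx, hx1⟩, ?_⟩
      intro i hi
      cases i with
      | zero => simpa using hd0
      | succ j =>
        rw [cfDigit_succ, hg]
        have := hdm j (by simpa using Nat.lt_of_succ_lt_succ hi)
        simpa using this

lemma cfVal_concat_one : ∀ B : List ℕ, B ≠ [] → cfVal (B ++ [1]) = cfVal (bump B) := by
  intro B
  induction B with
  | nil => intro h; exact absurd rfl h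
  | cons a m ih =>
    intro _
    cases m with
    | nil => simpa using cfVal_pair_one a
    | cons b m' =>
      rw [List.cons_append, bump_cons, cfVal_cons a ((b::m') ++ [1]),
        cfVal_cons a (bump (b::m')), ih (by simp)]

lemma cfVal_concat_two : ∀ B : List ℕ, ∀ c : ℕ, 2 ≤ c →
    cfVal (B ++ [c]) = cfVal (B ++ [c-1, 1]) := by
  intro B
  induction B with
  | nil =>
    intro c hc
    simp only [List.nil_append]
    rw [cfVal_singleton, cfVal_cons, cfVal_cons, cfVal_nil]
    have : ((c-1:ℕ):ℝ) = (c:ℝ) - 1 := by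
      push_cast [Nat.cast_sub (by omega : 1 ≤ c)]; ring
    rw [this]
    norm_num
  | cons a m ih =>
    intro c hc
    rw [List.cons_append, List.cons_append, cfVal_cons a (m ++ [c]),
      cfVal_cons a (m ++ [c-1,1]), ih c hc]

lemma exists_odd_rep (A : List ℕ) (hpos : ∀ b ∈ A, 1 ≤ b) (hne : A ≠ []) :
    ∃ B : List ℕ, (∀ b ∈ B, 1 ≤ b) ∧ B ≠ [] ∧ Odd B.length ∧ cfVal B = cfVal A := by
  rcases Nat.even_or_odd A.length with hev | hod
  · -- even length, ≥ 2
    have hlen2 : 2 ≤ A.length := by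
      have : A.length ≠ 0 := by simpa using hne
      rcases hev with ⟨k, hk⟩
      omega
    rcases List.eq_nil_or_concat A with rfl | ⟨B', c, hAeq⟩
    · exact absurd rfl hne
    rw [List.concat_eq_append] at hAeq
    subst hAeq
    have hB'pos : ∀ b ∈ B', 1 ≤ b := fun b hb => hpos b (by simp [hb])
    have hc : 1 ≤ c := hpos c (by simp)
    have hB'ne : B' ≠ [] := by
      intro h
      rw [h] at hlen2
      simp at hlen2
    have hlenA : (B' ++ [c]).length = B'.length + 1 := by simp
    rcases Nat.lt_or_ge c 2 with hc1 | hc2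
    · -- c = 1
      have hc1' : c = 1 := by omega
      subst hc1'
      refine ⟨bump B', bump_pos B' hB'pos, bump_ne_nil hB'ne, ?_, (cfVal_concat_one B' hB'ne).symm⟩
      rw [bump_length]
      rw [hlenA] at hev
      rcases hev with ⟨k, hk⟩
      rcases Nat.even_or_odd B'.length with h | h
      · exfalso; rcases h with ⟨j, hj⟩; omega
      · exact h
    · refine ⟨B' ++ [c-1, 1], ?_, by simp, ?_, (cfVal_concat_two B' c hc2).symm⟩
      · intro b hb
        rcases List.mem_append.mp hb with hb | hb
        · exact hB'pos b hb
        · simp at hb; omega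
      · have : (B' ++ [c-1,1]).length = B'.length + 2 := by simp
        rw [this]
        rw [hlenA] at hev
        rcases hev with ⟨k, hk⟩
        rcases Nat.even_or_odd (B'.length + 2) with h | h
        · exfalso; rcases h with ⟨j, hj⟩; omega
        · exact h
  · exact ⟨A, hpos, hne, hod, rfl⟩

section Measure

variable (μ : Measure ℝ) [IsProbabilityMeasure μ]
variable (hdist : ∀ x ∈ Icc (0 : ℝ) 1, μ (Icc 0 x) = ENNReal.ofReal (mink x))

include hdist

lemma mu_Ioc {s t : ℝ} (hs : 0 ≤ s) (hst : s ≤ t) (ht : t ≤ 1) :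
    μ (Ioc s t) = ENNReal.ofReal (mink t) - ENNReal.ofReal (mink s) := by
  have hdisj : Disjoint (Icc (0:ℝ) s) (Ioc s t) := by
    rw [Set.disjoint_left]
    rintro x ⟨_, hx2⟩ ⟨hx3, _⟩
    exact absurd hx2 (not_le.mpr hx3)
  have hunion : Icc (0:ℝ) s ∪ Ioc s t = Icc 0 t := Icc_union_Ioc_eq_Icc hs hst
  have hadd : μ (Icc (0:ℝ) s) + μ (Ioc s t) = μ (Icc 0 t) := by
    rw [← measure_union hdisj measurableSet_Ioc, hunion]
  have h1 := hdist s ⟨hs, le_trans hst ht⟩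
  have h2 := hdist t ⟨le_trans hs hst, ht⟩
  rw [h1, h2] at hadd
  exact ENNReal.eq_sub_of_add_eq (by finiteness) (by rw [add_comm]; exact hadd)

lemma atom_zero {A : List ℕ} (hpos : ∀ b ∈ A, 1 ≤ b) (hne : A ≠ []) :
    μ {cfVal A} = 0 := by
  obtain ⟨B, hBpos, hBne, hBodd, hBval⟩ := exists_odd_rep A hpos hne
  rw [← hBval]
  set r := cfVal B with hrdef
  have hr0 : 0 < r := cfVal_pos hBpos hBne
  have hr1 : r ≤ 1 := cfVal_le_one hBpos
  have hminkB : mink r = salem B := (main_val B.length B le_rfl hBpos).2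
  -- approximants from below
  have key : ∀ k : ℕ, μ {r} ≤ ENNReal.ofReal ((2:ℝ) ^ ((1:ℤ) - (B.sum:ℤ) - ((k+1:ℕ):ℤ))) := by
    intro k
    set x := cfVal (B ++ [k+1]) with hxdef
    have hxpos : ∀ b ∈ B ++ [k+1], 1 ≤ b := by
      intro b hb
      rcases List.mem_append.mp hb with hb | hb
      · exact hBpos b hb
      · simp at hb; omega
    have hx0 : 0 < x := cfVal_pos hxpos (by simp)
    have hxr : x < r := (cfVal_append_cmp (k+1) (by omega) B hBpos hBne).1 hBodd
    have hminkx : mink x = salem (B ++ [k+1]) := (main_val _ _ le_rfl hxpos).2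
    have hsx : salem (B ++ [k+1]) = salem B - 2 ^ ((1:ℤ) - (B.sum:ℤ) - ((k+1:ℕ):ℤ)) := by
      rw [salem_append B (k+1), Odd.neg_one_pow hBodd]
      ring
    have hsub : μ {r} ≤ μ (Ioc x r) := measure_mono (by
      intro z hz
      simp at hz
      subst hz
      exact ⟨hxr, le_refl r⟩)
    apply le_trans hsub
    rw [mu_Ioc μ hdist hx0.le hxr.le hr1]
    rw [hminkB, hminkx, hsx]
    have hsalemnn : 0 ≤ salem (B ++ [k+1]) := (salem_bounds _ hxpos).1
    rw [hsx] at hsalemnn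
    calc ENNReal.ofReal (salem B) - ENNReal.ofReal (salem B - 2 ^ ((1:ℤ) - (B.sum:ℤ) - ((k+1:ℕ):ℤ)))
        = ENNReal.ofReal (salem B - (salem B - 2 ^ ((1:ℤ) - (B.sum:ℤ) - ((k+1:ℕ):ℤ)))) := by
          rw [ENNReal.ofReal_sub _ hsalemnn]
      _ ≤ ENNReal.ofReal ((2:ℝ) ^ ((1:ℤ) - (B.sum:ℤ) - ((k+1:ℕ):ℤ))) := by
          apply ENNReal.ofReal_le_ofReal
          ring_nf
          exact le_refl _
  -- limit
  have htend : Filter.Tendsto (fun k : ℕ => ENNReal.ofReal ((2:ℝ) ^ ((1:ℤ) - (B.sum:ℤ) - ((k+1:ℕ):ℤ))))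
      Filter.atTop (nhds 0) := by
    have heq : ∀ k : ℕ, (2:ℝ) ^ ((1:ℤ) - (B.sum:ℤ) - ((k+1:ℕ):ℤ))
        = ((2:ℝ) ^ ((0:ℤ) - (B.sum:ℤ))) * (2⁻¹:ℝ) ^ k := by
      intro k
      rw [show ((1:ℤ) - (B.sum:ℤ) - ((k+1:ℕ):ℤ)) = ((0:ℤ) - (B.sum:ℤ)) + (-(k:ℤ)) by push_cast; ring]
      rw [zpow_add₀ two_ne_zero, zpow_neg, zpow_natCast, inv_pow]
    simp_rw [heq]
    rw [show (0 : ENNReal) = ENNReal.ofReal (((2:ℝ) ^ ((0:ℤ) - (B.sum:ℤ))) * 0) by simp]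
    apply ENNReal.tendsto_ofReal
    apply Filter.Tendsto.const_mul
    exact tendsto_pow_atTop_nhds_zero_of_lt_one (by norm_num) (by norm_num)
  have := ge_of_tendsto' htend key
  exact le_antisymm this zero_le

end Measure

end MinkProof

open MinkProof

/-- `μ` is the Bernoulli measure with weights `2^{-k}`: a continued-fraction cylinder
`[a_1,…,a_n]` has measure `2^{-(a_1+⋯+a_n)}`. -/
theorem minkMeasure_cylinder (μ : Measure ℝ) [IsProbabilityMeasure μ]
    (hdist : ∀ x ∈ Icc (0 : ℝ) 1, μ (Icc 0 x) = ENNReal.ofReal (mink x))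
    (hsupp : μ (Icc (0 : ℝ) 1) = 1)
    (n : ℕ) (a : Fin n → ℕ) (ha : ∀ i, 1 ≤ a i) :
    μ {x : ℝ | x ∈ Ioo (0 : ℝ) 1 ∧ ∀ i : Fin n, cfDigit i x = a i} =
      2⁻¹ ^ (∑ i, a i) := by
  classical
  have hmink1 : mink 1 = 1 := by
    have h1 : cfVal [1] = 1 := by simp
    have := (main_val 1 [1] (by simp) (by simp)).2
    rw [h1] at this
    rw [this]
    norm_num [salem]
  have hatom1 : μ {(1:ℝ)} = 0 := by
    have h1 : cfVal [1] = 1 := by simp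
    have := atom_zero μ hdist (A := [1]) (by simp) (by simp)
    rwa [h1] at this
  by_cases hn : n = 0
  · subst hn
    have hset : {x : ℝ | x ∈ Ioo (0:ℝ) 1 ∧ ∀ i : Fin 0, cfDigit i x = a i} = Ioo 0 1 := by
      ext x; simp
    rw [hset]
    have hIoc : μ (Ioc (0:ℝ) 1) = 1 := by
      rw [mu_Ioc μ hdist le_rfl zero_le_one le_rfl, hmink1, mink_zero]
      simp
    have h1 : μ (Ioc (0:ℝ) 1) ≤ μ (Ioo (0:ℝ) 1) + μ {(1:ℝ)} := by
      refine le_trans (measure_mono ?_) (measure_union_le _ _)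
      intro x ⟨hx1, hx2⟩
      rcases lt_or_eq_of_le hx2 with h | h
      · exact Or.inl ⟨hx1, h⟩
      · exact Or.inr (by simp [h])
    rw [hatom1, add_zero, hIoc] at h1
    have h2 : μ (Ioo (0:ℝ) 1) ≤ 1 := prob_le_one
    simp only [Finset.univ_eq_empty, Finset.sum_empty, pow_zero]
    exact le_antisymm h2 h1
  · set A := List.ofFn a with hAdef
    have hAlen : A.length = n := List.length_ofFn
    have hApos : ∀ b ∈ A, 1 ≤ b := by
      intro b hb
      rw [hAdef, List.mem_ofFn] at hb
      obtain ⟨i, rfl⟩ := hb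
      exact ha i
    have hAne : A ≠ [] := by
      intro h; rw [h] at hAlen; simp at hAlen; exact hn hAlen.symm
    have hgetD : ∀ (i : ℕ) (hi : i < n), A.getD i 0 = a ⟨i, hi⟩ := by
      intro i hi
      rw [List.getD_eq_getElem _ _ (by rw [hAlen]; exact hi)]
      simp [hAdef]
    set u := cfVal A with hudef
    set v := cfVal (bump A) with hvdef
    set l := min u v with hldef
    set r := max u v with hrdef
    have hbumppos := bump_pos A hApos
    have hbumpne := bump_ne_nil hAne
    have hu0 : 0 < u := cfVal_pos hApos hAne
    have hv0 : 0 < v := cfVal_pos hbumppos hbumpne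
    have hl0 : 0 < l := lt_min hu0 hv0
    have hu1 : u ≤ 1 := cfVal_le_one hApos
    have hv1 : v ≤ 1 := cfVal_le_one hbumppos
    have hr1 : r ≤ 1 := max_le hu1 hv1
    have hlr : l ≤ r := min_le_max
    have hatomu : μ {u} = 0 := atom_zero μ hdist hApos hAne
    have hatomv : μ {v} = 0 := atom_zero μ hdist hbumppos hbumpne
    have hatoml : μ {l} = 0 := by
      rcases min_cases u v with ⟨h, _⟩ | ⟨h, _⟩ <;> rw [hldef, h] <;> assumption
    have hatomr : μ {r} = 0 := by
      rcases max_cases u v with ⟨h, _⟩ | ⟨h, _⟩ <;> rw [hrdef, h] <;> assumption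
    have hminku : mink u = salem A := (main_val A.length A le_rfl hApos).2
    have hminkv : mink v = salem (bump A) := by
      have := (main_val (bump A).length (bump A) le_rfl hbumppos).2
      exact this
    have hsnn : 0 ≤ salem A := (salem_bounds A hApos).1
    have hsbnn : 0 ≤ salem (bump A) := (salem_bounds (bump A) hbumppos).1
    have hsb : salem (bump A) = salem A + (-1:ℝ)^A.length * 2 ^ (-(A.sum:ℤ)) :=
      salem_bump A hAne
    -- μ (Ioc l r)
    have hIoc : μ (Ioc l r) = ENNReal.ofReal ((2:ℝ) ^ (-(A.sum:ℤ))) := by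
      rcases Nat.even_or_odd A.length with hev | hod
      · have huv : u < v := (cfVal_bump_cmp A hApos hAne).2 hev
        rw [hldef, hrdef, min_eq_left huv.le, max_eq_right huv.le]
        rw [mu_Ioc μ hdist hu0.le huv.le hv1, hminku, hminkv,
          ← ENNReal.ofReal_sub _ hsnn, hsb, Even.neg_one_pow hev]
        ring_nf
      · have hvu : v < u := (cfVal_bump_cmp A hApos hAne).1 hod
        rw [hldef, hrdef, min_eq_right hvu.le, max_eq_left hvu.le]
        rw [mu_Ioc μ hdist hv0.le hvu.le hu1, hminku, hminkv,
          ← ENNReal.ofReal_sub _ hsbnn, hsb, Odd.neg_one_pow hod]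
        ring_nf
    -- squeeze
    have hIcc : μ (Icc l r) ≤ μ (Ioc l r) := by
      calc μ (Icc l r) ≤ μ ({l} ∪ Ioc l r) := by
            apply measure_mono
            intro x ⟨hx1, hx2⟩
            rcases eq_or_lt_of_le hx1 with h | h
            · exact Or.inl (by simp [← h])
            · exact Or.inr ⟨h, hx2⟩
        _ ≤ μ {l} + μ (Ioc l r) := measure_union_le _ _
        _ = μ (Ioc l r) := by rw [hatoml, zero_add]
    have hIoo : μ (Ioc l r) ≤ μ (Ioo l r) := by
      calc μ (Ioc l r) ≤ μ (Ioo l r ∪ {r}) := by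
            apply measure_mono
            intro x ⟨hx1, hx2⟩
            rcases lt_or_eq_of_le hx2 with h | h
            · exact Or.inl ⟨hx1, h⟩
            · exact Or.inr (by simp [h])
        _ ≤ μ (Ioo l r) + μ {r} := measure_union_le _ _
        _ = μ (Ioo l r) := by rw [hatomr, add_zero]
    have hsub1 : {x : ℝ | x ∈ Ioo (0 : ℝ) 1 ∧ ∀ i : Fin n, cfDigit i x = a i} ⊆ Icc l r := by
      rintro x ⟨⟨hx0, hx1⟩, hdig⟩
      exact Set.mem_Icc.mpr (subset_Icc A hApos hAne x hx0 hx1 (by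
        intro i hi
        rw [hAlen] at hi
        rw [hgetD i hi]
        exact hdig ⟨i, hi⟩))
    have hsub2 : Ioo l r ⊆ {x : ℝ | x ∈ Ioo (0 : ℝ) 1 ∧ ∀ i : Fin n, cfDigit i x = a i} := by
      rintro x ⟨hx1, hx2⟩
      obtain ⟨⟨h0, h1⟩, hdig⟩ := Ioo_subset A hApos hAne x hx1 hx2
      refine ⟨⟨h0, h1⟩, ?_⟩
      intro i
      have := hdig i (by rw [hAlen]; exact i.isLt)
      rw [hgetD i i.isLt] at this
      simpa using this
    have hfinal : μ {x : ℝ | x ∈ Ioo (0 : ℝ) 1 ∧ ∀ i : Fin n, cfDigit i x = a i}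
        = ENNReal.ofReal ((2:ℝ) ^ (-(A.sum:ℤ))) := by
      apply le_antisymm
      · exact le_trans (measure_mono hsub1) (le_trans hIcc hIoc.le)
      · rw [← hIoc]
        exact le_trans hIoo (measure_mono hsub2)
    rw [hfinal]
    have hsum : A.sum = ∑ i, a i := by rw [hAdef, List.sum_ofFn]
    rw [hsum]
    rw [show ((2:ℝ) ^ (-((∑ i, a i : ℕ):ℤ))) = ((2⁻¹:ℝ)) ^ (∑ i, a i) by
      rw [zpow_neg, zpow_natCast, inv_pow]]
    rw [ENNReal.ofReal_pow (by norm_num)]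
    congr 1
    rw [ENNReal.ofReal_inv_of_pos (by norm_num)]
    norm_num
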